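/- Fix M > 0 and ρ ∈ (0,1/2). For r ∈ (0, 1/(Me)) let λ_r be the unique zero of x ↦ Me^(rx) − x in (0,1/r), and define α_r = −λ_r, β_r = ρ·ln(r·λ_r)/r − λ_r, and K_{2,r} = −2·e^(2+r·λ_r)·(r·λ_r)^(1−2ρ)/(ρ·ln(r·λ_r)). Then as r → 0⁺: (a) α_r − β_r → +∞, (b) K_{2,r} → 0, and (c) β_r → −∞. -/

import Mathlib

open Real Filter Topology

theorem stmt_14 (M ρ : ℝ) (hM : 0 < M) (hρ0 : 0 < ρ) (hρ1 : ρ < 1 / 2)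
    (lam : ℝ → ℝ)
    (hlam : ∀ r ∈ Set.Ioo 0 (1 / (M * Real.exp 1)),
      0 < lam r ∧ lam r < 1 / r ∧ M * Real.exp (r * lam r) = lam r) :
    Tendsto (fun r => (-lam r) - (ρ * Real.log (r * lam r) / r - lam r))
        (nhdsWithin 0 (Set.Ioo 0 (1 / (M * Real.exp 1)))) atTop ∧
    Tendsto (fun r => -(2 * Real.exp (2 + r * lam r) * (r * lam r) ^ (1 - 2 * ρ))
          / (ρ * Real.log (r * lam r)))
        (nhdsWithin 0 (Set.Ioo 0 (1 / (M * Real.exp 1)))) (nhds 0) ∧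
    Tendsto (fun r => ρ * Real.log (r * lam r) / r - lam r)
        (nhdsWithin 0 (Set.Ioo 0 (1 / (M * Real.exp 1)))) atBot := by
  set c := 1 / (M * Real.exp 1) with hc
  set l := nhdsWithin (0:ℝ) (Set.Ioo 0 c) with hl
  have hMe : 0 < M * Real.exp 1 := by positivity
  have hmem : ∀ᶠ r in l, r ∈ Set.Ioo 0 c := self_mem_nhdsWithin
  have ht_pos : ∀ᶠ r in l, 0 < r * lam r := by
    filter_upwards [hmem] with r hr
    exact mul_pos hr.1 (hlam r hr).1
  have ht_lt1 : ∀ᶠ r in l, r * lam r < 1 := by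
    filter_upwards [hmem] with r hr
    have h2 := (hlam r hr).2.1
    have := mul_lt_mul_of_pos_left h2 hr.1
    rwa [mul_one_div, div_self (ne_of_gt hr.1)] at this
  have hlam_le : ∀ᶠ r in l, lam r ≤ M * Real.exp 1 := by
    filter_upwards [hmem, ht_lt1] with r hr h1
    have heq := (hlam r hr).2.2
    rw [← heq]
    have : Real.exp (r * lam r) ≤ Real.exp 1 := Real.exp_le_exp.mpr h1.le
    nlinarith
  -- t := r * lam r tends to 0
  have ht0 : Tendsto (fun r => r * lam r) l (𝓝 0) := by
    have hup : Tendsto (fun r : ℝ => r * (M * Real.exp 1)) l (𝓝 0) := by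
      have : Tendsto (fun r : ℝ => r * (M * Real.exp 1)) (𝓝 0) (𝓝 (0 * (M * Real.exp 1))) :=
        (continuous_id.mul continuous_const).tendsto 0
      simpa using this.mono_left nhdsWithin_le_nhds
    apply tendsto_of_tendsto_of_tendsto_of_le_of_le' tendsto_const_nhds hup
    · filter_upwards [ht_pos] with r hr using hr.le
    · filter_upwards [hmem, hlam_le] with r hr hle
      exact mul_le_mul_of_nonneg_left hle hr.1.le
  have htpos' : Tendsto (fun r => r * lam r) l (𝓝[>] 0) :=
    tendsto_nhdsWithin_of_tendsto_nhds_of_eventually_within _ ht0 ht_pos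
  have hlog : Tendsto (fun r => Real.log (r * lam r)) l atBot :=
    Real.tendsto_log_nhdsGT_zero.comp htpos'
  have hr1 : ∀ᶠ r in l, r < 1 :=
    ((eventually_lt_nhds (by norm_num : (0:ℝ) < 1)).filter_mono nhdsWithin_le_nhds)
  have hA : Tendsto (fun r => -(ρ * Real.log (r * lam r) / r)) l atTop := by
    have hbase : Tendsto (fun r => ρ * (-Real.log (r * lam r))) l atTop :=
      (tendsto_neg_atBot_atTop.comp hlog).const_mul_atTop hρ0
    apply tendsto_atTop_mono' l _ hbase
    filter_upwards [hmem, ht_pos, ht_lt1, hr1] with r hr hp h1 hlt1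
    have hL : Real.log (r * lam r) < 0 := Real.log_neg hp h1
    have hrw : -(ρ * Real.log (r * lam r) / r) = ρ * (-Real.log (r * lam r)) / r := by ring
    rw [hrw, le_div_iff₀ hr.1]
    nlinarith [mul_nonneg hρ0.le (neg_nonneg.mpr hL.le)]
  refine ⟨?_, ?_, ?_⟩
  · have : (fun r => (-lam r) - (ρ * Real.log (r * lam r) / r - lam r))
        = fun r => -(ρ * Real.log (r * lam r) / r) := by
      funext r; ring
    rw [this]; exact hA
  · have hnum : Tendsto
        (fun r => -(2 * Real.exp (2 + r * lam r) * (r * lam r) ^ (1 - 2 * ρ))) l (𝓝 0) := by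
      have hp : (0:ℝ) < 1 - 2 * ρ := by linarith
      have h1 : Tendsto (fun r => (r * lam r) ^ (1 - 2 * ρ)) l (𝓝 0) := by
        have hcont := (Real.continuousAt_rpow_const 0 (1 - 2 * ρ) (Or.inr hp.le)).tendsto.comp ht0
        simpa [Real.zero_rpow (ne_of_gt hp), Function.comp_def] using hcont
      have h2 : Tendsto (fun r => Real.exp (2 + r * lam r)) l (𝓝 (Real.exp 2)) := by
        have hadd : Tendsto (fun r => 2 + r * lam r) l (𝓝 2) := by
          simpa using (tendsto_const_nhds (x := (2:ℝ)) (f := l)).add ht0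
        exact (Real.continuous_exp.tendsto 2).comp hadd
      have := (((tendsto_const_nhds (x := (2:ℝ)) (f := l)).mul h2).mul h1).neg
      simpa [Function.comp] using this
    have hden : Tendsto (fun r => ρ * Real.log (r * lam r)) l atBot :=
      hlog.const_mul_atBot hρ0
    have hdenT : Tendsto (fun r => -(ρ * Real.log (r * lam r))) l atTop := tendsto_neg_atBot_atTop.comp hden
    have h0 : Tendsto (fun r =>
        -(2 * Real.exp (2 + r * lam r) * (r * lam r) ^ (1 - 2 * ρ))
          / -(ρ * Real.log (r * lam r))) l (𝓝 0) := hnum.div_atTop hdenT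
    have := h0.neg
    simp only [div_neg, neg_neg] at this
    simpa using this
  · have hB : Tendsto (fun r => ρ * Real.log (r * lam r) / r) l atBot := by
      have h := tendsto_neg_atTop_atBot.comp hA
      have heq : (Neg.neg ∘ fun r => -(ρ * Real.log (r * lam r) / r))
          = fun r => ρ * Real.log (r * lam r) / r := by
        funext r; simp
      rwa [heq] at h
    apply tendsto_atBot_mono' l _ hB
    filter_upwards [hmem] with r hr
    have := (hlam r hr).1
    linarith
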